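/- (Rawnsley; exactness of the d̆*-sequence) Fix n and for 0 ≤ q ≤ n write H_{n−q,q} for the corresponding subspace of H^{⊗n}. The sequence 0 → H^{∧n} = H_{0,n} →^{d̆*_{n−1}} H_{1,n−1} →^{d̆*_{n−2}} ⋯ →^{d̆*_0} H_{n,0} = H^{⊙n} → 0 is exact: d̆*_{n−1} is injective, d̆*_0 is surjective, and for every 1 ≤ q ≤ n−1, ker(d̆*_{q−1} : H_{n−q,q} → H_{n−q+1,q−1}) = im(d̆*_q : H_{n−q−1,q+1} → H_{n−q,q}). -/

import Mathlib

open scoped BigOperators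

noncomputable section

variable (F : Type*) [Field F] [CharZero F] (H : Type*) [AddCommGroup H] [Module F H]

/-- The `n`-th tensor power of `H` over `F`. -/
abbrev TP (n : ℕ) : Type _ := PiTensorProduct F (fun _ : Fin n => H)

/-- The action of a permutation `σ ∈ S_n` on the `n`-th tensor power,
permuting the tensor factors. -/
def permMap (n : ℕ) (σ : Equiv.Perm (Fin n)) : TP F H n →ₗ[F] TP F H n :=
  (PiTensorProduct.reindex F (fun _ : Fin n => H) σ).toLinearMap

/-- Identification of tensor powers of equal degrees. -/
def tpCast {m m' : ℕ} (hm : m = m') : TP F H m →ₗ[F] TP F H m' :=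
  (PiTensorProduct.reindex F (fun _ : Fin m => H) (finCongr hm)).toLinearMap

/-- The permutations of `{1, …, n}` moving only positions in `a`. -/
def permsOn (n : ℕ) (a : Finset (Fin n)) : Finset (Equiv.Perm (Fin n)) :=
  Finset.univ.filter fun σ => ∀ i, i ∉ a → σ i = i

/-- `S_a`: symmetrisation over the positions in `a` (the average over all
permutations of the positions in `a`, fixing the other positions). -/
def symOn (n : ℕ) (a : Finset (Fin n)) : TP F H n →ₗ[F] TP F H n :=
  (a.card.factorial : F)⁻¹ • ∑ σ ∈ permsOn n a, permMap F H n σ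

/-- `A_a`: skew-symmetrisation over the positions in `a` (the signed average over
all permutations of the positions in `a`, fixing the other positions). -/
def altOn (n : ℕ) (a : Finset (Fin n)) : TP F H n →ₗ[F] TP F H n :=
  (a.card.factorial : F)⁻¹ • ∑ σ ∈ permsOn n a, (Equiv.Perm.sign σ : ℤ) • permMap F H n σ

/-- The first `k` positions of `{1, …, n}`. -/
def firstSet (n k : ℕ) : Finset (Fin n) := Finset.univ.filter fun i => (i : ℕ) < k

/-- The last `m` positions of `{1, …, n}`. -/
def lastSet (n m : ℕ) : Finset (Fin n) := Finset.univ.filter fun i => n - m ≤ (i : ℕ)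

/-- `H^{⊙a,∧aᶜ}`: the image of `S_a ∘ A_{aᶜ}`, the subspace of `n`-tensors symmetric in
the positions of `a` and skew-symmetric in the positions of `aᶜ`. -/
def Hgen (n : ℕ) (a : Finset (Fin n)) : Submodule F (TP F H n) :=
  LinearMap.range (symOn F H n a ∘ₗ altOn F H n aᶜ)

/-- `H_{k,n-k} = H^{⊙k} ⊗ H^{∧(n-k)}`: the subspace of `n`-tensors symmetric in the
first `k` positions and skew-symmetric in the remaining positions. -/
def Hmix (n k : ℕ) : Submodule F (TP F H n) := Hgen F H n (firstSet n k)

/-- `H^{⊙[k],∧[n-k]}`: the span of the subspaces `H^{⊙a,∧aᶜ}` over all `k`-element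
subsets `a ⊆ {1, …, n}`. -/
def HmixSpan (n k : ℕ) : Submodule F (TP F H n) :=
  ⨆ a ∈ {a : Finset (Fin n) | a.card = k}, Hgen F H n a

/-- The global operator whose restriction to `H_{k,q}` (with `m = q + 1`, `n = k + q`)
is `d̆_q`: skew-symmetrisation of the last `m` positions, scaled by `m`. -/
def dOp (n m : ℕ) : TP F H n →ₗ[F] TP F H n := (m : F) • altOn F H n (lastSet n m)

/-- The global operator whose restriction to `H_{k-1,q+1}` (with `m = k`, `n = k + q`)
is `d̆*_q`: symmetrisation of the first `m` positions, scaled by `m`. -/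
def dStarOp (n m : ℕ) : TP F H n →ₗ[F] TP F H n := (m : F) • symOn F H n (firstSet n m)

/-- The elementary element `h₁⊙…⊙h_k ⊗ x₁∧…∧x_q` of `H_{k,q} ⊆ H^{⊗(k+q)}`. -/
def elem (k q : ℕ) (h : Fin k → H) (x : Fin q → H) : TP F H (k + q) :=
  ∑ ρ : Equiv.Perm (Fin k), ∑ τ : Equiv.Perm (Fin q),
    (Equiv.Perm.sign τ : ℤ) •
      (PiTensorProduct.tprod F (Fin.append (h ∘ ρ) (x ∘ τ)) : TP F H (k + q))


set_option linter.unusedSectionVars false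
set_option maxHeartbeats 1000000


section Aux
variable {n : ℕ}

lemma permMap_one : permMap F H n 1 = LinearMap.id := by
  unfold permMap
  rw [show (1 : Equiv.Perm (Fin n)) = Equiv.refl (Fin n) from rfl,
    PiTensorProduct.reindex_refl]
  rfl

lemma permMap_mul (σ τ : Equiv.Perm (Fin n)) :
    permMap F H n (σ * τ) = permMap F H n σ ∘ₗ permMap F H n τ := by
  unfold permMap
  rw [show σ * τ = τ.trans σ from rfl, ← PiTensorProduct.reindex_trans τ σ]
  rfl

lemma mem_permsOn {a : Finset (Fin n)} {σ : Equiv.Perm (Fin n)} :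
    σ ∈ permsOn n a ↔ ∀ i ∉ a, σ i = i := by
  simp [permsOn]

lemma one_mem_permsOn (a : Finset (Fin n)) : 1 ∈ permsOn n a := by
  simp [mem_permsOn]

lemma mul_mem_permsOn {a : Finset (Fin n)} {σ τ : Equiv.Perm (Fin n)}
    (hσ : σ ∈ permsOn n a) (hτ : τ ∈ permsOn n a) : σ * τ ∈ permsOn n a := by
  rw [mem_permsOn] at *
  intro i hi
  simp [hτ i hi, hσ i hi]

lemma inv_mem_permsOn {a : Finset (Fin n)} {σ : Equiv.Perm (Fin n)}
    (hσ : σ ∈ permsOn n a) : σ⁻¹ ∈ permsOn n a := by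
  rw [mem_permsOn] at *
  intro i hi
  have := hσ i hi
  conv_lhs => rw [← this]
  exact σ.symm_apply_apply i

lemma permsOn_mono {a b : Finset (Fin n)} (h : a ⊆ b) : permsOn n a ⊆ permsOn n b := by
  intro σ hσ
  rw [mem_permsOn] at *
  exact fun i hi => hσ i fun hia => hi (h hia)

lemma apply_mem_permsOn {a : Finset (Fin n)} {σ : Equiv.Perm (Fin n)}
    (hσ : σ ∈ permsOn n a) {i : Fin n} (hi : i ∈ a) : σ i ∈ a := by
  by_contra hc
  rw [mem_permsOn] at hσ
  have := hσ (σ i) hc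
  have h2 : σ i = i := σ.injective this
  rw [h2] at hc
  exact hc hi

lemma swap_mem_permsOn {a : Finset (Fin n)} {i j : Fin n} (hi : i ∈ a) (hj : j ∈ a) :
    Equiv.swap i j ∈ permsOn n a := by
  rw [mem_permsOn]
  intro l hl
  have h1 : l ≠ i := fun h => hl (h ▸ hi)
  have h2 : l ≠ j := fun h => hl (h ▸ hj)
  exact Equiv.swap_apply_of_ne_of_ne h1 h2

lemma card_permsOn (a : Finset (Fin n)) : (permsOn n a).card = a.card.factorial := by
  rw [← Fintype.card_coe]
  have e1 : {σ // σ ∈ permsOn n a} ≃ {f : Equiv.Perm (Fin n) // ∀ i, ¬ i ∈ a → f i = i} :=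
    Equiv.subtypeEquivRight (by intro σ; rw [mem_permsOn])
  rw [Fintype.card_congr (e1.trans (Equiv.Perm.subtypeEquivSubtypePerm (· ∈ a)).symm),
    Fintype.card_perm, Fintype.card_coe]

end Aux


section Aux2
variable {n : ℕ}

def sgnF (σ : Equiv.Perm (Fin n)) : F := ((Equiv.Perm.sign σ : ℤ) : F)

lemma sgnF_one : sgnF F (1 : Equiv.Perm (Fin n)) = 1 := by simp [sgnF]

lemma sgnF_mul (σ τ : Equiv.Perm (Fin n)) : sgnF F (σ * τ) = sgnF F σ * sgnF F τ := by
  simp [sgnF]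

lemma sgnF_inv (σ : Equiv.Perm (Fin n)) : sgnF F σ⁻¹ = sgnF F σ := by
  simp [sgnF]

lemma sgnF_mul_self (σ : Equiv.Perm (Fin n)) : sgnF F σ * sgnF F σ = 1 := by
  simp only [sgnF, ← Int.cast_mul, ← Units.val_mul, Int.units_mul_self, Units.val_one,
    Int.cast_one]

lemma sgnF_swap {i j : Fin n} (h : i ≠ j) : sgnF F (Equiv.swap i j) = -1 := by
  simp [sgnF, Equiv.Perm.sign_swap h]

lemma altOn_eq (a : Finset (Fin n)) :
    altOn F H n a
      = (a.card.factorial : F)⁻¹ • ∑ σ ∈ permsOn n a, sgnF F σ • permMap F H n σ := by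
  unfold altOn
  refine congrArg (fun X => (a.card.factorial : F)⁻¹ • X) ?_
  exact Finset.sum_congr rfl fun σ _ => (Int.cast_smul_eq_zsmul F _ _).symm

lemma sum_comp' {β : Type*} (s : Finset β) (f : β → (TP F H n →ₗ[F] TP F H n))
    (g : TP F H n →ₗ[F] TP F H n) : (∑ i ∈ s, f i) ∘ₗ g = ∑ i ∈ s, f i ∘ₗ g := by
  refine LinearMap.ext fun x => ?_
  simp [LinearMap.sum_apply]

lemma comp_sum' {β : Type*} (s : Finset β) (f : β → (TP F H n →ₗ[F] TP F H n))
    (g : TP F H n →ₗ[F] TP F H n) : g ∘ₗ (∑ i ∈ s, f i) = ∑ i ∈ s, g ∘ₗ f i := by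
  refine LinearMap.ext fun x => ?_
  simp [LinearMap.sum_apply]

lemma sum_permsOn_mulRight {a : Finset (Fin n)} {σ : Equiv.Perm (Fin n)} (hσ : σ ∈ permsOn n a)
    {M : Type*} [AddCommMonoid M] (f : Equiv.Perm (Fin n) → M) :
    ∑ τ ∈ permsOn n a, f (τ * σ) = ∑ τ ∈ permsOn n a, f τ := by
  refine Finset.sum_bijective (· * σ) (Equiv.mulRight σ).bijective (fun τ => ?_) (fun τ _ => rfl)
  constructor
  · exact fun h => mul_mem_permsOn h hσ
  · intro h
    have := mul_mem_permsOn h (inv_mem_permsOn hσ)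
    simpa using this

lemma sum_permsOn_mulLeft {a : Finset (Fin n)} {σ : Equiv.Perm (Fin n)} (hσ : σ ∈ permsOn n a)
    {M : Type*} [AddCommMonoid M] (f : Equiv.Perm (Fin n) → M) :
    ∑ τ ∈ permsOn n a, f (σ * τ) = ∑ τ ∈ permsOn n a, f τ := by
  refine Finset.sum_bijective (σ * ·) (Equiv.mulLeft σ).bijective (fun τ => ?_) (fun τ _ => rfl)
  constructor
  · exact fun h => mul_mem_permsOn hσ h
  · intro h
    have := mul_mem_permsOn (inv_mem_permsOn hσ) h
    simpa [← mul_assoc] using this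

lemma symOn_comp_permMap {a : Finset (Fin n)} {σ : Equiv.Perm (Fin n)} (hσ : σ ∈ permsOn n a) :
    symOn F H n a ∘ₗ permMap F H n σ = symOn F H n a := by
  unfold symOn
  rw [LinearMap.smul_comp]
  congr 1
  rw [sum_comp']
  calc ∑ τ ∈ permsOn n a, permMap F H n τ ∘ₗ permMap F H n σ
      = ∑ τ ∈ permsOn n a, permMap F H n (τ * σ) :=
        Finset.sum_congr rfl fun τ _ => (permMap_mul F H τ σ).symm
    _ = ∑ τ ∈ permsOn n a, permMap F H n τ := sum_permsOn_mulRight hσ _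

lemma permMap_comp_symOn {a : Finset (Fin n)} {σ : Equiv.Perm (Fin n)} (hσ : σ ∈ permsOn n a) :
    permMap F H n σ ∘ₗ symOn F H n a = symOn F H n a := by
  unfold symOn
  rw [LinearMap.comp_smul]
  congr 1
  rw [comp_sum']
  calc ∑ τ ∈ permsOn n a, permMap F H n σ ∘ₗ permMap F H n τ
      = ∑ τ ∈ permsOn n a, permMap F H n (σ * τ) :=
        Finset.sum_congr rfl fun τ _ => (permMap_mul F H σ τ).symm
    _ = ∑ τ ∈ permsOn n a, permMap F H n τ := sum_permsOn_mulLeft hσ _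

lemma altOn_comp_permMap {a : Finset (Fin n)} {σ : Equiv.Perm (Fin n)} (hσ : σ ∈ permsOn n a) :
    altOn F H n a ∘ₗ permMap F H n σ = sgnF F σ • altOn F H n a := by
  rw [altOn_eq, LinearMap.smul_comp, smul_comm]
  congr 1
  rw [sum_comp']
  have h1 : ∀ τ ∈ permsOn n a,
      (sgnF F τ • permMap F H n τ) ∘ₗ permMap F H n σ
        = (fun ρ => (sgnF F ρ * sgnF F σ) • permMap F H n ρ) (τ * σ) := by
    intro τ _
    dsimp only
    rw [LinearMap.smul_comp, ← permMap_mul, sgnF_mul, mul_assoc, sgnF_mul_self, mul_one]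
  calc ∑ τ ∈ permsOn n a, (sgnF F τ • permMap F H n τ) ∘ₗ permMap F H n σ
      = ∑ τ ∈ permsOn n a,
          (fun ρ => (sgnF F ρ * sgnF F σ) • permMap F H n ρ) (τ * σ) :=
        Finset.sum_congr rfl h1
    _ = ∑ τ ∈ permsOn n a, (fun ρ => (sgnF F ρ * sgnF F σ) • permMap F H n ρ) τ :=
        sum_permsOn_mulRight hσ (fun ρ => (sgnF F ρ * sgnF F σ) • permMap F H n ρ)
    _ = sgnF F σ • ∑ τ ∈ permsOn n a, sgnF F τ • permMap F H n τ := by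
        rw [Finset.smul_sum]
        exact Finset.sum_congr rfl fun τ _ => by dsimp only; rw [smul_smul, mul_comm]

lemma permMap_comp_altOn {a : Finset (Fin n)} {σ : Equiv.Perm (Fin n)} (hσ : σ ∈ permsOn n a) :
    permMap F H n σ ∘ₗ altOn F H n a = sgnF F σ • altOn F H n a := by
  rw [altOn_eq, LinearMap.comp_smul, smul_comm]
  congr 1
  rw [comp_sum']
  have h1 : ∀ τ ∈ permsOn n a,
      permMap F H n σ ∘ₗ (sgnF F τ • permMap F H n τ)
        = (fun ρ => (sgnF F σ * sgnF F ρ) • permMap F H n ρ) (σ * τ) := by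
    intro τ _
    dsimp only
    rw [LinearMap.comp_smul, ← permMap_mul, sgnF_mul, ← mul_assoc, sgnF_mul_self, one_mul]
  calc ∑ τ ∈ permsOn n a, permMap F H n σ ∘ₗ (sgnF F τ • permMap F H n τ)
      = ∑ τ ∈ permsOn n a,
          (fun ρ => (sgnF F σ * sgnF F ρ) • permMap F H n ρ) (σ * τ) :=
        Finset.sum_congr rfl h1
    _ = ∑ τ ∈ permsOn n a, (fun ρ => (sgnF F σ * sgnF F ρ) • permMap F H n ρ) τ :=
        sum_permsOn_mulLeft hσ (fun ρ => (sgnF F σ * sgnF F ρ) • permMap F H n ρ)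
    _ = sgnF F σ • ∑ τ ∈ permsOn n a, sgnF F τ • permMap F H n τ := by
        rw [Finset.smul_sum]
        exact Finset.sum_congr rfl fun τ _ => by dsimp only; rw [smul_smul]

end Aux2

section Aux3
variable {n : ℕ}

lemma symOn_comp_symOn {a b : Finset (Fin n)} (h : b ⊆ a) :
    symOn F H n a ∘ₗ symOn F H n b = symOn F H n a := by
  conv_lhs =>
    rw [show symOn F H n b
      = (b.card.factorial : F)⁻¹ • ∑ σ ∈ permsOn n b, permMap F H n σ from rfl]
  rw [LinearMap.comp_smul, comp_sum']
  rw [Finset.sum_congr rfl fun σ hσ => symOn_comp_permMap F H (permsOn_mono h hσ),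
    Finset.sum_const, card_permsOn, ← Nat.cast_smul_eq_nsmul F, smul_smul,
    inv_mul_cancel₀ (Nat.cast_ne_zero.mpr (Nat.factorial_ne_zero _)), one_smul]

lemma symOn_comp_symOn' {a b : Finset (Fin n)} (h : b ⊆ a) :
    symOn F H n b ∘ₗ symOn F H n a = symOn F H n a := by
  conv_lhs =>
    rw [show symOn F H n b
      = (b.card.factorial : F)⁻¹ • ∑ σ ∈ permsOn n b, permMap F H n σ from rfl]
  rw [LinearMap.smul_comp, sum_comp']
  rw [Finset.sum_congr rfl fun σ hσ => permMap_comp_symOn F H (permsOn_mono h hσ),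
    Finset.sum_const, card_permsOn, ← Nat.cast_smul_eq_nsmul F, smul_smul,
    inv_mul_cancel₀ (Nat.cast_ne_zero.mpr (Nat.factorial_ne_zero _)), one_smul]

lemma altOn_comp_altOn {a b : Finset (Fin n)} (h : b ⊆ a) :
    altOn F H n a ∘ₗ altOn F H n b = altOn F H n a := by
  conv_lhs => rw [altOn_eq F H b]
  rw [LinearMap.comp_smul, comp_sum']
  have h1 : ∀ σ ∈ permsOn n b,
      altOn F H n a ∘ₗ (sgnF F σ • permMap F H n σ) = altOn F H n a := by
    intro σ hσ
    rw [LinearMap.comp_smul, altOn_comp_permMap F H (permsOn_mono h hσ), smul_smul,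
      sgnF_mul_self, one_smul]
  rw [Finset.sum_congr rfl h1, Finset.sum_const, card_permsOn, ← Nat.cast_smul_eq_nsmul F,
    smul_smul, inv_mul_cancel₀ (Nat.cast_ne_zero.mpr (Nat.factorial_ne_zero _)), one_smul]

lemma altOn_comp_altOn' {a b : Finset (Fin n)} (h : b ⊆ a) :
    altOn F H n b ∘ₗ altOn F H n a = altOn F H n a := by
  conv_lhs => rw [altOn_eq F H b]
  rw [LinearMap.smul_comp, sum_comp']
  have h1 : ∀ σ ∈ permsOn n b,
      (sgnF F σ • permMap F H n σ) ∘ₗ altOn F H n a = altOn F H n a := by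
    intro σ hσ
    rw [LinearMap.smul_comp, permMap_comp_altOn F H (permsOn_mono h hσ), smul_smul,
      sgnF_mul_self, one_smul]
  rw [Finset.sum_congr rfl h1, Finset.sum_const, card_permsOn, ← Nat.cast_smul_eq_nsmul F,
    smul_smul, inv_mul_cancel₀ (Nat.cast_ne_zero.mpr (Nat.factorial_ne_zero _)), one_smul]

lemma perm_comm_of_disjoint {a b : Finset (Fin n)} {σ τ : Equiv.Perm (Fin n)}
    (hd : Disjoint a b) (hσ : σ ∈ permsOn n a) (hτ : τ ∈ permsOn n b) : σ * τ = τ * σ := by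
  have hσ' := mem_permsOn.mp hσ
  have hτ' := mem_permsOn.mp hτ
  apply Equiv.ext
  intro i
  show σ (τ i) = τ (σ i)
  by_cases hia : i ∈ a
  · have hib : i ∉ b := fun hb => (Finset.disjoint_left.mp hd hia) hb
    have h2 : σ i ∈ a := apply_mem_permsOn hσ hia
    rw [hτ' i hib, hτ' (σ i) (fun hb => (Finset.disjoint_left.mp hd h2) hb)]
  · rw [hσ' i hia]
    by_cases hib : i ∈ b
    · have h2 : τ i ∈ b := apply_mem_permsOn hτ hib
      rw [hσ' (τ i) (fun ha => (Finset.disjoint_right.mp hd h2) ha)]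
    · rw [hτ' i hib, hσ' i hia]

lemma permMap_comp_symOn_comm {a b : Finset (Fin n)} {τ : Equiv.Perm (Fin n)}
    (hd : Disjoint a b) (hτ : τ ∈ permsOn n b) :
    permMap F H n τ ∘ₗ symOn F H n a = symOn F H n a ∘ₗ permMap F H n τ := by
  unfold symOn
  rw [LinearMap.comp_smul, LinearMap.smul_comp]
  congr 1
  rw [comp_sum', sum_comp']
  refine Finset.sum_congr rfl fun σ hσ => ?_
  rw [← permMap_mul, ← permMap_mul, perm_comm_of_disjoint hd.symm hτ hσ]

lemma permMap_comp_altOn_comm {a b : Finset (Fin n)} {τ : Equiv.Perm (Fin n)}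
    (hd : Disjoint a b) (hτ : τ ∈ permsOn n b) :
    permMap F H n τ ∘ₗ altOn F H n a = altOn F H n a ∘ₗ permMap F H n τ := by
  rw [altOn_eq, LinearMap.comp_smul, LinearMap.smul_comp]
  congr 1
  rw [comp_sum', sum_comp']
  refine Finset.sum_congr rfl fun σ hσ => ?_
  rw [LinearMap.comp_smul, LinearMap.smul_comp, ← permMap_mul, ← permMap_mul,
    perm_comm_of_disjoint hd.symm hτ hσ]

lemma symOn_comp_altOn_comm {a b : Finset (Fin n)} (hd : Disjoint a b) :
    symOn F H n a ∘ₗ altOn F H n b = altOn F H n b ∘ₗ symOn F H n a := by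
  unfold symOn
  rw [LinearMap.comp_smul, LinearMap.smul_comp]
  congr 1
  rw [comp_sum', sum_comp']
  exact Finset.sum_congr rfl fun σ hσ => (permMap_comp_altOn_comm F H hd.symm hσ)

lemma symOn_comp_altOn_eq_zero {a b : Finset (Fin n)} {p r : Fin n} (hpr : p ≠ r)
    (hpa : p ∈ a) (hra : r ∈ a) (hpb : p ∈ b) (hrb : r ∈ b) :
    symOn F H n a ∘ₗ altOn F H n b = 0 := by
  have h1 : symOn F H n a ∘ₗ (permMap F H n (Equiv.swap p r) ∘ₗ altOn F H n b)
      = symOn F H n a ∘ₗ altOn F H n b := by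
    rw [← LinearMap.comp_assoc, symOn_comp_permMap F H (swap_mem_permsOn hpa hra)]
  rw [permMap_comp_altOn F H (swap_mem_permsOn hpb hrb), sgnF_swap F hpr,
    LinearMap.comp_smul] at h1
  set X := symOn F H n a ∘ₗ altOn F H n b with hX
  have h2 : (2 : F) • X = 0 := by
    have h3 : (-1 : F) • X + X = X + X := by rw [h1]
    have h4 : (-1 : F) • X + X = 0 := by module
    rw [two_smul, ← h3, h4]
  rcases smul_eq_zero.mp h2 with h | h
  · exact absurd h two_ne_zero
  · exact h

lemma permsOn_of_card_le_one {a : Finset (Fin n)} (h : a.card ≤ 1) : permsOn n a = {1} := by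
  ext σ
  rw [Finset.mem_singleton]
  constructor
  · intro hσ
    apply Equiv.ext
    intro i
    show σ i = i
    by_cases hi : i ∈ a
    · exact Finset.card_le_one.mp h _ (apply_mem_permsOn hσ hi) _ hi
    · exact mem_permsOn.mp hσ i hi
  · rintro rfl
    exact one_mem_permsOn a

lemma factorial_of_card_le_one {a : Finset (Fin n)} (h : a.card ≤ 1) :
    a.card.factorial = 1 := by
  rcases Nat.le_one_iff_eq_zero_or_eq_one.mp h with h' | h' <;> rw [h'] <;> rfl

lemma symOn_eq_id {a : Finset (Fin n)} (h : a.card ≤ 1) :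
    symOn F H n a = LinearMap.id := by
  unfold symOn
  rw [permsOn_of_card_le_one h, Finset.sum_singleton, permMap_one,
    factorial_of_card_le_one h]
  norm_num

lemma altOn_eq_id {a : Finset (Fin n)} (h : a.card ≤ 1) :
    altOn F H n a = LinearMap.id := by
  unfold altOn
  rw [permsOn_of_card_le_one h, Finset.sum_singleton, permMap_one,
    factorial_of_card_le_one h]
  norm_num

lemma mem_firstSet {k : ℕ} {i : Fin n} : i ∈ firstSet n k ↔ (i : ℕ) < k := by
  simp [firstSet]

lemma mem_lastSet {m : ℕ} {i : Fin n} : i ∈ lastSet n m ↔ n - m ≤ (i : ℕ) := by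
  simp [lastSet]

lemma card_firstSet {k : ℕ} (h : k ≤ n) : (firstSet n k).card = k := by
  have : firstSet n k = Finset.map (Fin.castLEEmb h) Finset.univ := by
    ext i
    simp only [Finset.mem_map, Finset.mem_univ, true_and]
    rw [mem_firstSet]
    constructor
    · intro hi
      exact ⟨⟨(i : ℕ), hi⟩, Fin.ext rfl⟩
    · rintro ⟨j, rfl⟩
      exact j.isLt
  rw [this, Finset.card_map, Finset.card_univ, Fintype.card_fin]

lemma compl_firstSet {k : ℕ} (h : k ≤ n) : (firstSet n k)ᶜ = lastSet n (n - k) := by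
  ext i
  rw [Finset.mem_compl, mem_firstSet, mem_lastSet]
  omega

lemma card_lastSet {m : ℕ} (h : m ≤ n) : (lastSet n m).card = m := by
  have h1 : lastSet n m = (firstSet n (n - m))ᶜ := by
    rw [compl_firstSet (by omega)]
    congr 1
    omega
  rw [h1, Finset.card_compl, card_firstSet (by omega), Fintype.card_fin]
  omega

lemma firstSet_subset {k k' : ℕ} (h : k ≤ k') : firstSet n k ⊆ firstSet n k' := by
  intro i hi
  rw [mem_firstSet] at *
  omega

lemma lastSet_subset {m m' : ℕ} (h : m ≤ m') : lastSet n m ⊆ lastSet n m' := by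
  intro i hi
  rw [mem_lastSet] at *
  omega

lemma disjoint_firstSet_lastSet {k m : ℕ} (h : k + m ≤ n) :
    Disjoint (firstSet n k) (lastSet n m) := by
  rw [Finset.disjoint_left]
  intro i hi hi'
  rw [mem_firstSet] at hi
  rw [mem_lastSet] at hi'
  omega

end Aux3



section Aux4
variable {n : ℕ}

/-- The projector onto `H_{k,n-k}`. -/
def projOp (n k : ℕ) : TP F H n →ₗ[F] TP F H n :=
  symOn F H n (firstSet n k) ∘ₗ altOn F H n (lastSet n (n - k))

lemma projOp_apply (k : ℕ) (x : TP F H n) :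
    projOp F H n k x
      = symOn F H n (firstSet n k) (altOn F H n (lastSet n (n - k)) x) := rfl

lemma projOp_proj {k : ℕ} (h : k ≤ n) (x : TP F H n) :
    projOp F H n k (projOp F H n k x) = projOp F H n k x := by
  have hd : Disjoint (firstSet n k) (lastSet n (n - k)) :=
    disjoint_firstSet_lastSet (by omega)
  have e1 : ∀ y, altOn F H n (lastSet n (n - k)) (symOn F H n (firstSet n k) y)
      = symOn F H n (firstSet n k) (altOn F H n (lastSet n (n - k)) y) :=
    fun y => (LinearMap.congr_fun (symOn_comp_altOn_comm F H hd) y).symm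
  have e2 : ∀ y, symOn F H n (firstSet n k) (symOn F H n (firstSet n k) y)
      = symOn F H n (firstSet n k) y :=
    fun y => LinearMap.congr_fun (symOn_comp_symOn F H (subset_refl _)) y
  have e3 : ∀ y, altOn F H n (lastSet n (n - k)) (altOn F H n (lastSet n (n - k)) y)
      = altOn F H n (lastSet n (n - k)) y :=
    fun y => LinearMap.congr_fun (altOn_comp_altOn F H (subset_refl _)) y
  rw [projOp_apply, projOp_apply, e1, e2, e3]

lemma mem_Hmix_iff {k : ℕ} (h : k ≤ n) {v : TP F H n} :
    v ∈ Hmix F H n k ↔ projOp F H n k v = v := by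
  have hrange : Hmix F H n k
      = LinearMap.range (symOn F H n (firstSet n k) ∘ₗ altOn F H n (lastSet n (n - k))) := by
    unfold Hmix Hgen
    rw [compl_firstSet h]
  rw [hrange]
  constructor
  · rintro ⟨t, rfl⟩
    exact projOp_proj F H h t
  · intro hv
    exact ⟨v, hv⟩

lemma symOn_mem_Hmix {k q : ℕ} (hn : n = k + q) (hk : 1 ≤ k) {v : TP F H n}
    (hv : v ∈ Hmix F H n (k - 1)) :
    symOn F H n (firstSet n k) v ∈ Hmix F H n k := by
  rw [mem_Hmix_iff F H (show k ≤ n by omega)]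
  rw [mem_Hmix_iff F H (show k - 1 ≤ n by omega)] at hv
  have hq1 : n - (k - 1) = q + 1 := by omega
  have hq : n - k = q := by omega
  have c1 : ∀ y, altOn F H n (lastSet n q) (symOn F H n (firstSet n k) y)
      = symOn F H n (firstSet n k) (altOn F H n (lastSet n q) y) :=
    fun y => (LinearMap.congr_fun
      (symOn_comp_altOn_comm F H (disjoint_firstSet_lastSet (by omega))) y).symm
  have c2 : ∀ y, altOn F H n (lastSet n q) (symOn F H n (firstSet n (k - 1)) y)
      = symOn F H n (firstSet n (k - 1)) (altOn F H n (lastSet n q) y) :=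
    fun y => (LinearMap.congr_fun
      (symOn_comp_altOn_comm F H (disjoint_firstSet_lastSet (by omega))) y).symm
  have c3 : ∀ y, altOn F H n (lastSet n q) (altOn F H n (lastSet n (q + 1)) y)
      = altOn F H n (lastSet n (q + 1)) y :=
    fun y => LinearMap.congr_fun (altOn_comp_altOn' F H (lastSet_subset (by omega))) y
  have c4 : ∀ y, symOn F H n (firstSet n k) (symOn F H n (firstSet n (k - 1)) y)
      = symOn F H n (firstSet n k) y :=
    fun y => LinearMap.congr_fun (symOn_comp_symOn F H (firstSet_subset (by omega))) y
  have c5 : ∀ y, symOn F H n (firstSet n k) (symOn F H n (firstSet n k) y)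
      = symOn F H n (firstSet n k) y :=
    fun y => LinearMap.congr_fun (symOn_comp_symOn F H (subset_refl _)) y
  conv_lhs => rw [← hv]
  conv_rhs => rw [← hv]
  rw [projOp_apply, projOp_apply, hq1, hq, c1, c2, c3, c4, c5]

lemma altOn_mem_Hmix {k q : ℕ} (hn : n = k + q) (hk : 1 ≤ k) {v : TP F H n}
    (hv : v ∈ Hmix F H n k) :
    altOn F H n (lastSet n (q + 1)) v ∈ Hmix F H n (k - 1) := by
  rw [mem_Hmix_iff F H (show k - 1 ≤ n by omega)]
  rw [mem_Hmix_iff F H (show k ≤ n by omega)] at hv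
  have hq1 : n - (k - 1) = q + 1 := by omega
  have hq : n - k = q := by omega
  have c1 : ∀ y, altOn F H n (lastSet n (q + 1)) (altOn F H n (lastSet n (q + 1)) y)
      = altOn F H n (lastSet n (q + 1)) y :=
    fun y => LinearMap.congr_fun (altOn_comp_altOn F H (subset_refl _)) y
  have c2 : ∀ y, symOn F H n (firstSet n (k - 1)) (altOn F H n (lastSet n (q + 1)) y)
      = altOn F H n (lastSet n (q + 1)) (symOn F H n (firstSet n (k - 1)) y) :=
    fun y => LinearMap.congr_fun
      (symOn_comp_altOn_comm F H (disjoint_firstSet_lastSet (by omega))) y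
  have c3 : ∀ y, symOn F H n (firstSet n (k - 1)) (symOn F H n (firstSet n k) y)
      = symOn F H n (firstSet n k) y :=
    fun y => LinearMap.congr_fun (symOn_comp_symOn' F H (firstSet_subset (by omega))) y
  conv_lhs => rw [← hv]
  conv_rhs => rw [← hv]
  rw [projOp_apply, projOp_apply, hq1, hq, c1, c2, c3]

lemma dStarOp_mem_Hmix {k q : ℕ} (hn : n = k + q) (hk : 1 ≤ k) {v : TP F H n}
    (hv : v ∈ Hmix F H n (k - 1)) : dStarOp F H n k v ∈ Hmix F H n k := by
  unfold dStarOp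
  simp only [LinearMap.smul_apply]
  exact Submodule.smul_mem _ _ (symOn_mem_Hmix F H hn hk hv)

lemma dOp_mem_Hmix {k q : ℕ} (hn : n = k + q) (hk : 1 ≤ k) {v : TP F H n}
    (hv : v ∈ Hmix F H n k) : dOp F H n (q + 1) v ∈ Hmix F H n (k - 1) := by
  unfold dOp
  simp only [LinearMap.smul_apply]
  exact Submodule.smul_mem _ _ (altOn_mem_Hmix F H hn hk hv)

end Aux4

section Aux5
variable {n : ℕ}

lemma EE {a b : Finset (Fin n)} (hd : Disjoint a b) :
    (symOn F H n a ∘ₗ altOn F H n b) ∘ₗ (symOn F H n a ∘ₗ altOn F H n b)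
      = symOn F H n a ∘ₗ altOn F H n b := by
  refine LinearMap.ext fun x => ?_
  have c1 : ∀ y, altOn F H n b (symOn F H n a y) = symOn F H n a (altOn F H n b y) :=
    fun y => (LinearMap.congr_fun (symOn_comp_altOn_comm F H hd) y).symm
  have c2 : ∀ y, symOn F H n a (symOn F H n a y) = symOn F H n a y :=
    fun y => LinearMap.congr_fun (symOn_comp_symOn F H (subset_refl _)) y
  have c3 : ∀ y, altOn F H n b (altOn F H n b y) = altOn F H n b y :=
    fun y => LinearMap.congr_fun (altOn_comp_altOn F H (subset_refl _)) y
  simp only [LinearMap.comp_apply]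
  rw [c1, c2, c3]

lemma E_perm_left_alt {a b : Finset (Fin n)} {τ : Equiv.Perm (Fin n)}
    (hd : Disjoint a b) (hτ : τ ∈ permsOn n b) :
    permMap F H n τ ∘ₗ (symOn F H n a ∘ₗ altOn F H n b)
      = sgnF F τ • (symOn F H n a ∘ₗ altOn F H n b) := by
  rw [← LinearMap.comp_assoc, permMap_comp_symOn_comm F H hd hτ, LinearMap.comp_assoc,
    permMap_comp_altOn F H hτ, LinearMap.comp_smul]

lemma E_perm_right_alt {a b : Finset (Fin n)} {τ : Equiv.Perm (Fin n)}
    (hd : Disjoint a b) (hτ : τ ∈ permsOn n b) :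
    (symOn F H n a ∘ₗ altOn F H n b) ∘ₗ permMap F H n τ
      = sgnF F τ • (symOn F H n a ∘ₗ altOn F H n b) := by
  rw [LinearMap.comp_assoc, altOn_comp_permMap F H hτ, LinearMap.comp_smul]

lemma E_perm_left_sym {a b : Finset (Fin n)} {τ : Equiv.Perm (Fin n)}
    (hd : Disjoint a b) (hτ : τ ∈ permsOn n a) :
    permMap F H n τ ∘ₗ (symOn F H n a ∘ₗ altOn F H n b)
      = symOn F H n a ∘ₗ altOn F H n b := by
  rw [← LinearMap.comp_assoc, permMap_comp_symOn F H hτ]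

lemma E_perm_right_sym {a b : Finset (Fin n)} {τ : Equiv.Perm (Fin n)}
    (hd : Disjoint a b) (hτ : τ ∈ permsOn n a) :
    (symOn F H n a ∘ₗ altOn F H n b) ∘ₗ permMap F H n τ
      = symOn F H n a ∘ₗ altOn F H n b := by
  rw [LinearMap.comp_assoc, ← permMap_comp_altOn_comm F H hd.symm hτ,
    ← LinearMap.comp_assoc, symOn_comp_permMap F H hτ]

lemma mem_permsOn_of_insert {b : Finset (Fin n)} {p : Fin n} {τ : Equiv.Perm (Fin n)}
    (hτ : τ ∈ permsOn n (insert p b)) (hfix : τ p = p) : τ ∈ permsOn n b := by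
  rw [mem_permsOn] at *
  intro i hi
  by_cases hip : i = p
  · subst hip; exact hfix
  · exact hτ i (by simp [Finset.mem_insert, hip, hi])

lemma sum_insert_swap {b : Finset (Fin n)} {p : Fin n} (hp : p ∉ b)
    {M : Type*} [AddCommMonoid M] (g : Fin n → M) :
    ∑ σ ∈ permsOn n (insert p b), g (σ p)
      = b.card.factorial • ∑ c ∈ insert p b, g c := by
  have himage : Finset.image (fun σ => σ p) (permsOn n (insert p b)) = insert p b := by
    ext c
    rw [Finset.mem_image]
    constructor
    · rintro ⟨σ, hσ, rfl⟩
      exact apply_mem_permsOn hσ (Finset.mem_insert_self p b)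
    · intro hc
      exact ⟨Equiv.swap p c, swap_mem_permsOn (Finset.mem_insert_self p b) hc,
        Equiv.swap_apply_left p c⟩
  have hfiber : ∀ c ∈ insert p b,
      ((permsOn n (insert p b)).filter (fun σ => σ p = c)).card = b.card.factorial := by
    intro c hc
    rw [← card_permsOn (n := n) b]
    refine Finset.card_nbij' (fun σ => Equiv.swap p c * σ) (fun τ => Equiv.swap p c * τ)
      ?_ ?_ ?_ ?_
    · intro σ hσ
      rw [Finset.mem_coe, Finset.mem_filter] at hσ
      refine mem_permsOn_of_insert
        (mul_mem_permsOn (swap_mem_permsOn (Finset.mem_insert_self p b) hc) hσ.1) ?_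
      show Equiv.swap p c (σ p) = p
      rw [hσ.2, Equiv.swap_apply_right]
    · intro τ hτ
      rw [Finset.mem_coe] at hτ
      rw [Finset.mem_coe, Finset.mem_filter]
      refine ⟨mul_mem_permsOn (swap_mem_permsOn (Finset.mem_insert_self p b) hc)
        (permsOn_mono (Finset.subset_insert p b) hτ), ?_⟩
      show Equiv.swap p c (τ p) = c
      rw [mem_permsOn.mp hτ p hp, Equiv.swap_apply_left]
    · intro σ _
      simp [← mul_assoc, Equiv.swap_mul_self]
    · intro τ _
      simp [← mul_assoc, Equiv.swap_mul_self]
  calc ∑ σ ∈ permsOn n (insert p b), g (σ p)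
      = ∑ c ∈ (permsOn n (insert p b)).image (fun σ => σ p),
          ((permsOn n (insert p b)).filter fun σ => σ p = c).card • g c :=
        Finset.sum_comp g (fun σ : Equiv.Perm (Fin n) => σ p)
    _ = ∑ c ∈ insert p b,
          ((permsOn n (insert p b)).filter fun σ => σ p = c).card • g c := by rw [himage]
    _ = ∑ c ∈ insert p b, b.card.factorial • g c :=
        Finset.sum_congr rfl fun c hc => by rw [hfiber c hc]
    _ = b.card.factorial • ∑ c ∈ insert p b, g c := (Finset.smul_sum).symm

lemma half_sandwich {E1 M1 M2 : TP F H n →ₗ[F] TP F H n} {s : F}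
    (h : M2 ∘ₗ E1 = s • E1) :
    E1 ∘ₗ (M1 ∘ₗ M2) ∘ₗ E1 = s • (E1 ∘ₗ M1 ∘ₗ E1) := by
  refine LinearMap.ext fun x => ?_
  have a1 : ∀ y, M2 (E1 y) = s • E1 y := fun y => LinearMap.congr_fun h y
  simp only [LinearMap.comp_apply, LinearMap.smul_apply]
  rw [a1, map_smul, map_smul]

lemma sandwich {E1 M1 M2 : TP F H n →ₗ[F] TP F H n} {s : F}
    (h1 : M1 ∘ₗ E1 = s • E1) (h2 : E1 ∘ₗ M1 = s • E1) (hs : s * s = 1) :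
    E1 ∘ₗ ((M1 ∘ₗ M2) ∘ₗ M1) ∘ₗ E1 = E1 ∘ₗ M2 ∘ₗ E1 := by
  refine LinearMap.ext fun x => ?_
  have a1 : ∀ y, M1 (E1 y) = s • E1 y := fun y => LinearMap.congr_fun h1 y
  have a2 : ∀ y, E1 (M1 y) = s • E1 y := fun y => LinearMap.congr_fun h2 y
  simp only [LinearMap.comp_apply, LinearMap.smul_apply]
  rw [a1, map_smul, map_smul, map_smul, a2, smul_smul, hs, one_smul]

lemma eSwapE_eq_alt {a b : Finset (Fin n)} {p c r : Fin n} (hd : Disjoint a b)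
    (hp : p ∉ b) (hc : c ∈ b) (hr : r ∈ b) :
    (symOn F H n a ∘ₗ altOn F H n b) ∘ₗ permMap F H n (Equiv.swap p c)
        ∘ₗ (symOn F H n a ∘ₗ altOn F H n b)
      = (symOn F H n a ∘ₗ altOn F H n b) ∘ₗ permMap F H n (Equiv.swap p r)
          ∘ₗ (symOn F H n a ∘ₗ altOn F H n b) := by
  by_cases hcr : c = r
  · subst hcr; rfl
  have hρ : Equiv.swap r c ∈ permsOn n b := swap_mem_permsOn hr hc
  have hpr : p ≠ r := fun h => hp (h ▸ hr)
  have hpc : p ≠ c := fun h => hp (h ▸ hc)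
  have hρp : Equiv.swap r c p = p := Equiv.swap_apply_of_ne_of_ne hpr hpc
  have hconj : Equiv.swap p c
      = Equiv.swap r c * Equiv.swap p r * (Equiv.swap r c)⁻¹ := by
    rw [← Equiv.swap_apply_apply (Equiv.swap r c) p r, hρp, Equiv.swap_apply_left]
  rw [hconj, Equiv.swap_inv, permMap_mul, permMap_mul]
  exact sandwich F H (E_perm_left_alt F H hd hρ) (E_perm_right_alt F H hd hρ)
    (sgnF_mul_self F _)

lemma eSwapE_eq_sym {a b : Finset (Fin n)} {r c p : Fin n} (hd : Disjoint a b)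
    (hr : r ∉ a) (hc : c ∈ a) (hp : p ∈ a) :
    (symOn F H n a ∘ₗ altOn F H n b) ∘ₗ permMap F H n (Equiv.swap r c)
        ∘ₗ (symOn F H n a ∘ₗ altOn F H n b)
      = (symOn F H n a ∘ₗ altOn F H n b) ∘ₗ permMap F H n (Equiv.swap r p)
          ∘ₗ (symOn F H n a ∘ₗ altOn F H n b) := by
  by_cases hcp : c = p
  · subst hcp; rfl
  have hρ : Equiv.swap p c ∈ permsOn n a := swap_mem_permsOn hp hc
  have hrp : r ≠ p := fun h => hr (h ▸ hp)
  have hrc : r ≠ c := fun h => hr (h ▸ hc)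
  have hρr : Equiv.swap p c r = r := Equiv.swap_apply_of_ne_of_ne hrp hrc
  have hconj : Equiv.swap r c
      = Equiv.swap p c * Equiv.swap r p * (Equiv.swap p c)⁻¹ := by
    rw [← Equiv.swap_apply_apply (Equiv.swap p c) r p, hρr, Equiv.swap_apply_left]
  rw [hconj, Equiv.swap_inv, permMap_mul, permMap_mul]
  have h1 : permMap F H n (Equiv.swap p c) ∘ₗ (symOn F H n a ∘ₗ altOn F H n b)
      = (1 : F) • (symOn F H n a ∘ₗ altOn F H n b) := by
    rw [one_smul]; exact E_perm_left_sym F H hd hρ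
  have h2 : (symOn F H n a ∘ₗ altOn F H n b) ∘ₗ permMap F H n (Equiv.swap p c)
      = (1 : F) • (symOn F H n a ∘ₗ altOn F H n b) := by
    rw [one_smul]; exact E_perm_right_sym F H hd hρ
  exact sandwich F H h1 h2 (by norm_num)

lemma P1_alt {a b : Finset (Fin n)} {p : Fin n} {σ : Equiv.Perm (Fin n)}
    (hd : Disjoint a b) (hp : p ∉ b) (hσ : σ ∈ permsOn n (insert p b)) :
    sgnF F σ • ((symOn F H n a ∘ₗ altOn F H n b) ∘ₗ permMap F H n σ
        ∘ₗ (symOn F H n a ∘ₗ altOn F H n b))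
      = sgnF F (Equiv.swap p (σ p)) •
          ((symOn F H n a ∘ₗ altOn F H n b) ∘ₗ permMap F H n (Equiv.swap p (σ p))
            ∘ₗ (symOn F H n a ∘ₗ altOn F H n b)) := by
  have hc : σ p ∈ insert p b := apply_mem_permsOn hσ (Finset.mem_insert_self p b)
  have hsw : Equiv.swap p (σ p) ∈ permsOn n (insert p b) :=
    swap_mem_permsOn (Finset.mem_insert_self p b) hc
  have hτ' : Equiv.swap p (σ p) * σ ∈ permsOn n (insert p b) := mul_mem_permsOn hsw hσ
  have hτp : (Equiv.swap p (σ p) * σ) p = p := by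
    show Equiv.swap p (σ p) (σ p) = p
    rw [Equiv.swap_apply_right]
  have hτb : Equiv.swap p (σ p) * σ ∈ permsOn n b := mem_permsOn_of_insert hτ' hτp
  have hdecomp : σ = Equiv.swap p (σ p) * (Equiv.swap p (σ p) * σ) := by
    rw [← mul_assoc, Equiv.swap_mul_self, one_mul]
  have habs : permMap F H n (Equiv.swap p (σ p) * σ)
      ∘ₗ (symOn F H n a ∘ₗ altOn F H n b)
      = sgnF F (Equiv.swap p (σ p) * σ) • (symOn F H n a ∘ₗ altOn F H n b) :=
    E_perm_left_alt F H hd hτb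
  conv_lhs => rw [hdecomp, permMap_mul]
  rw [half_sandwich F H habs, sgnF_mul, smul_smul, mul_assoc, sgnF_mul_self,
    mul_one]

lemma P1_sym {a b : Finset (Fin n)} {r : Fin n} {σ : Equiv.Perm (Fin n)}
    (hd : Disjoint a b) (hr : r ∉ a) (hσ : σ ∈ permsOn n (insert r a)) :
    (symOn F H n a ∘ₗ altOn F H n b) ∘ₗ permMap F H n σ
        ∘ₗ (symOn F H n a ∘ₗ altOn F H n b)
      = (symOn F H n a ∘ₗ altOn F H n b) ∘ₗ permMap F H n (Equiv.swap r (σ r))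
          ∘ₗ (symOn F H n a ∘ₗ altOn F H n b) := by
  have hc : σ r ∈ insert r a := apply_mem_permsOn hσ (Finset.mem_insert_self r a)
  have hsw : Equiv.swap r (σ r) ∈ permsOn n (insert r a) :=
    swap_mem_permsOn (Finset.mem_insert_self r a) hc
  have hτ' : Equiv.swap r (σ r) * σ ∈ permsOn n (insert r a) := mul_mem_permsOn hsw hσ
  have hτp : (Equiv.swap r (σ r) * σ) r = r := by
    show Equiv.swap r (σ r) (σ r) = r
    rw [Equiv.swap_apply_right]
  have hτa : Equiv.swap r (σ r) * σ ∈ permsOn n a := mem_permsOn_of_insert hτ' hτp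
  have hdecomp : σ = Equiv.swap r (σ r) * (Equiv.swap r (σ r) * σ) := by
    rw [← mul_assoc, Equiv.swap_mul_self, one_mul]
  have habs : permMap F H n (Equiv.swap r (σ r) * σ)
      ∘ₗ (symOn F H n a ∘ₗ altOn F H n b)
      = (1 : F) • (symOn F H n a ∘ₗ altOn F H n b) := by
    rw [one_smul]; exact E_perm_left_sym F H hd hτa
  conv_lhs => rw [hdecomp, permMap_mul]
  rw [half_sandwich F H habs, one_smul]

end Aux5

section Aux6
variable {n : ℕ}

lemma key_alt {a b : Finset (Fin n)} (hd : Disjoint a b) {p r : Fin n}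
    (hp : p ∉ b) (hr : r ∈ b) :
    (symOn F H n a ∘ₗ altOn F H n b) ∘ₗ altOn F H n (insert p b)
        ∘ₗ (symOn F H n a ∘ₗ altOn F H n b)
      = ((b.card + 1 : ℕ) : F)⁻¹ •
          ((symOn F H n a ∘ₗ altOn F H n b)
            - (b.card : F) • ((symOn F H n a ∘ₗ altOn F H n b)
                ∘ₗ permMap F H n (Equiv.swap p r)
                ∘ₗ (symOn F H n a ∘ₗ altOn F H n b))) := by
  have hexp : (symOn F H n a ∘ₗ altOn F H n b) ∘ₗ altOn F H n (insert p b)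
      ∘ₗ (symOn F H n a ∘ₗ altOn F H n b)
      = ((insert p b).card.factorial : F)⁻¹ •
          ∑ σ ∈ permsOn n (insert p b), sgnF F σ •
            ((symOn F H n a ∘ₗ altOn F H n b) ∘ₗ permMap F H n σ
              ∘ₗ (symOn F H n a ∘ₗ altOn F H n b)) := by
    conv_lhs => rw [altOn_eq F H (insert p b)]
    rw [LinearMap.smul_comp, LinearMap.comp_smul, sum_comp', comp_sum']
    congr 1
    refine Finset.sum_congr rfl fun σ hσ => ?_
    rw [LinearMap.smul_comp, LinearMap.comp_smul]
  rw [hexp]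
  set g : Fin n → (TP F H n →ₗ[F] TP F H n) := fun c =>
    sgnF F (Equiv.swap p c) • ((symOn F H n a ∘ₗ altOn F H n b)
      ∘ₗ permMap F H n (Equiv.swap p c) ∘ₗ (symOn F H n a ∘ₗ altOn F H n b)) with hg
  have hsum : ∑ σ ∈ permsOn n (insert p b), sgnF F σ •
      ((symOn F H n a ∘ₗ altOn F H n b) ∘ₗ permMap F H n σ
        ∘ₗ (symOn F H n a ∘ₗ altOn F H n b))
      = b.card.factorial • ∑ c ∈ insert p b, g c := by
    rw [← sum_insert_swap hp g]
    exact Finset.sum_congr rfl fun σ hσ => by rw [hg]; exact P1_alt F H hd hp hσ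
  rw [hsum]
  have hgp : g p = symOn F H n a ∘ₗ altOn F H n b := by
    rw [hg]
    dsimp only
    rw [Equiv.swap_self, show (Equiv.refl (Fin n) : Equiv.Perm (Fin n)) = 1 from rfl,
      sgnF_one, permMap_one, one_smul, LinearMap.id_comp]
    exact EE F H hd
  have hgc : ∀ c ∈ b, g c = (-1 : F) • ((symOn F H n a ∘ₗ altOn F H n b)
      ∘ₗ permMap F H n (Equiv.swap p r) ∘ₗ (symOn F H n a ∘ₗ altOn F H n b)) := by
    intro c hc
    rw [hg]
    dsimp only
    rw [sgnF_swap F (fun h => hp (by rw [h]; exact hc)), eSwapE_eq_alt F H hd hp hc hr]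
  rw [Finset.sum_insert hp, hgp, Finset.sum_congr rfl hgc, Finset.sum_const]
  rw [Finset.card_insert_of_notMem hp, ← Nat.cast_smul_eq_nsmul F, ← Nat.cast_smul_eq_nsmul F]
  have h0 : ((b.card + 1).factorial : F) = ((b.card + 1 : ℕ) : F) * (b.card.factorial : F) := by
    rw [Nat.factorial_succ]
    push_cast
    ring
  rw [h0]
  have h1 : ((b.card + 1 : ℕ) : F) ≠ 0 := Nat.cast_ne_zero.mpr (by omega)
  have h2 : (b.card.factorial : F) ≠ 0 := Nat.cast_ne_zero.mpr (Nat.factorial_ne_zero _)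
  match_scalars
  · field_simp
  · field_simp

lemma key_sym {a b : Finset (Fin n)} (hd : Disjoint a b) {r p : Fin n}
    (hr : r ∉ a) (hp : p ∈ a) :
    (symOn F H n a ∘ₗ altOn F H n b) ∘ₗ symOn F H n (insert r a)
        ∘ₗ (symOn F H n a ∘ₗ altOn F H n b)
      = ((a.card + 1 : ℕ) : F)⁻¹ •
          ((symOn F H n a ∘ₗ altOn F H n b)
            + (a.card : F) • ((symOn F H n a ∘ₗ altOn F H n b)
                ∘ₗ permMap F H n (Equiv.swap p r)
                ∘ₗ (symOn F H n a ∘ₗ altOn F H n b))) := by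
  have hexp : (symOn F H n a ∘ₗ altOn F H n b) ∘ₗ symOn F H n (insert r a)
      ∘ₗ (symOn F H n a ∘ₗ altOn F H n b)
      = ((insert r a).card.factorial : F)⁻¹ •
          ∑ σ ∈ permsOn n (insert r a),
            ((symOn F H n a ∘ₗ altOn F H n b) ∘ₗ permMap F H n σ
              ∘ₗ (symOn F H n a ∘ₗ altOn F H n b)) := by
    conv_lhs => rw [show symOn F H n (insert r a)
      = ((insert r a).card.factorial : F)⁻¹ •
          ∑ σ ∈ permsOn n (insert r a), permMap F H n σ from rfl]
    rw [LinearMap.smul_comp, LinearMap.comp_smul, sum_comp', comp_sum']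
  rw [hexp]
  set g : Fin n → (TP F H n →ₗ[F] TP F H n) := fun c =>
    (symOn F H n a ∘ₗ altOn F H n b)
      ∘ₗ permMap F H n (Equiv.swap r c) ∘ₗ (symOn F H n a ∘ₗ altOn F H n b) with hg
  have hsum : ∑ σ ∈ permsOn n (insert r a),
      ((symOn F H n a ∘ₗ altOn F H n b) ∘ₗ permMap F H n σ
        ∘ₗ (symOn F H n a ∘ₗ altOn F H n b))
      = a.card.factorial • ∑ c ∈ insert r a, g c := by
    rw [← sum_insert_swap hr g]
    exact Finset.sum_congr rfl fun σ hσ => by rw [hg]; exact P1_sym F H hd hr hσ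
  rw [hsum]
  have hgp : g r = symOn F H n a ∘ₗ altOn F H n b := by
    rw [hg]
    dsimp only
    rw [Equiv.swap_self, show (Equiv.refl (Fin n) : Equiv.Perm (Fin n)) = 1 from rfl,
      permMap_one, LinearMap.id_comp]
    exact EE F H hd
  have hgc : ∀ c ∈ a, g c = (symOn F H n a ∘ₗ altOn F H n b)
      ∘ₗ permMap F H n (Equiv.swap p r) ∘ₗ (symOn F H n a ∘ₗ altOn F H n b) := by
    intro c hc
    rw [hg]
    dsimp only
    rw [eSwapE_eq_sym F H hd hr hc hp, Equiv.swap_comm]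
  rw [Finset.sum_insert hr, hgp, Finset.sum_congr rfl hgc, Finset.sum_const]
  rw [Finset.card_insert_of_notMem hr, ← Nat.cast_smul_eq_nsmul F, ← Nat.cast_smul_eq_nsmul F]
  have h0 : ((a.card + 1).factorial : F) = ((a.card + 1 : ℕ) : F) * (a.card.factorial : F) := by
    rw [Nat.factorial_succ]
    push_cast
    ring
  rw [h0]
  have h1 : ((a.card + 1 : ℕ) : F) ≠ 0 := Nat.cast_ne_zero.mpr (by omega)
  have h2 : (a.card.factorial : F) ≠ 0 := Nat.cast_ne_zero.mpr (Nat.factorial_ne_zero _)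
  match_scalars
  · field_simp
  · field_simp

lemma sym_absorb {a b a' : Finset (Fin n)} (hd : Disjoint a b) (hsub : a ⊆ a')
    (Y : TP F H n →ₗ[F] TP F H n) :
    symOn F H n a ∘ₗ (altOn F H n b ∘ₗ (symOn F H n a' ∘ₗ Y))
      = altOn F H n b ∘ₗ (symOn F H n a' ∘ₗ Y) := by
  conv_lhs => rw [show symOn F H n a
    = (a.card.factorial : F)⁻¹ • ∑ σ ∈ permsOn n a, permMap F H n σ from rfl]
  rw [LinearMap.smul_comp, sum_comp']
  have h1 : ∀ σ ∈ permsOn n a,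
      permMap F H n σ ∘ₗ (altOn F H n b ∘ₗ (symOn F H n a' ∘ₗ Y))
        = altOn F H n b ∘ₗ (symOn F H n a' ∘ₗ Y) := by
    intro σ hσ
    rw [← LinearMap.comp_assoc, permMap_comp_altOn_comm F H hd.symm hσ,
      LinearMap.comp_assoc, ← LinearMap.comp_assoc Y (symOn F H n a') (permMap F H n σ),
      permMap_comp_symOn F H (permsOn_mono hsub hσ)]
  rw [Finset.sum_congr rfl h1, Finset.sum_const, card_permsOn, ← Nat.cast_smul_eq_nsmul F,
    smul_smul, inv_mul_cancel₀ (Nat.cast_ne_zero.mpr (Nat.factorial_ne_zero _)), one_smul]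

end Aux6

section Aux7
variable {n : ℕ}

lemma homotopy {k q : ℕ} (hn : n = k + q) (hk : 1 ≤ k) (hq : 1 ≤ q) {v : TP F H n}
    (hv : v ∈ Hmix F H n k) :
    dStarOp F H n k (dOp F H n (q + 1) v) + dOp F H n q (dStarOp F H n (k + 1) v)
      = (n : F) • v := by
  have hd : Disjoint (firstSet n k) (lastSet n q) := disjoint_firstSet_lastSet (by omega)
  have hkn : k < n := by omega
  have hk1n : k - 1 < n := by omega
  set p : Fin n := ⟨k - 1, hk1n⟩ with hpdef
  set r : Fin n := ⟨k, hkn⟩ with hrdef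
  have hpB : p ∉ lastSet n q := by
    rw [mem_lastSet]
    show ¬ n - q ≤ k - 1
    omega
  have hrB : r ∈ lastSet n q := by
    rw [mem_lastSet]
    show n - q ≤ k
    omega
  have hpA : p ∈ firstSet n k := by
    rw [mem_firstSet]
    show k - 1 < k
    omega
  have hrA : r ∉ firstSet n k := by
    rw [mem_firstSet]
    show ¬ k < k
    omega
  have hBins : insert p (lastSet n q) = lastSet n (q + 1) := by
    ext i
    rw [Finset.mem_insert, mem_lastSet, mem_lastSet, Fin.ext_iff]
    show (i : ℕ) = k - 1 ∨ n - q ≤ (i : ℕ) ↔ n - (q + 1) ≤ (i : ℕ)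
    omega
  have hAins : insert r (firstSet n k) = firstSet n (k + 1) := by
    ext i
    rw [Finset.mem_insert, mem_firstSet, mem_firstSet, Fin.ext_iff]
    show (i : ℕ) = k ∨ (i : ℕ) < k ↔ (i : ℕ) < k + 1
    omega
  have hcB : (lastSet n q).card = q := card_lastSet (by omega)
  have hcA : (firstSet n k).card = k := card_firstSet (by omega)
  have hEv : (symOn F H n (firstSet n k) ∘ₗ altOn F H n (lastSet n q)) v = v := by
    have h2 := (mem_Hmix_iff F H (show k ≤ n by omega)).mp hv
    rw [projOp_apply, show n - k = q from by omega] at h2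
    exact h2
  have hKA := key_alt F H hd hpB hrB
  rw [hBins, hcB] at hKA
  have hKS := key_sym F H hd hrA hpA
  rw [hAins, hcA] at hKS
  have habs1 : altOn F H n (lastSet n q) ∘ₗ altOn F H n (lastSet n (q + 1))
      = altOn F H n (lastSet n (q + 1)) := altOn_comp_altOn' F H (lastSet_subset (by omega))
  have hop1 : symOn F H n (firstSet n k) ∘ₗ (altOn F H n (lastSet n (q + 1))
        ∘ₗ (symOn F H n (firstSet n k) ∘ₗ altOn F H n (lastSet n q)))
      = (symOn F H n (firstSet n k) ∘ₗ altOn F H n (lastSet n q))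
        ∘ₗ altOn F H n (lastSet n (q + 1))
          ∘ₗ (symOn F H n (firstSet n k) ∘ₗ altOn F H n (lastSet n q)) := by
    conv_lhs => rw [← habs1]
    simp only [LinearMap.comp_assoc]
  have hop2 : altOn F H n (lastSet n q) ∘ₗ (symOn F H n (firstSet n (k + 1))
        ∘ₗ (symOn F H n (firstSet n k) ∘ₗ altOn F H n (lastSet n q)))
      = (symOn F H n (firstSet n k) ∘ₗ altOn F H n (lastSet n q))
        ∘ₗ symOn F H n (firstSet n (k + 1))
          ∘ₗ (symOn F H n (firstSet n k) ∘ₗ altOn F H n (lastSet n q)) := by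
    have := sym_absorb F H hd (firstSet_subset (show k ≤ k + 1 by omega))
      (symOn F H n (firstSet n k) ∘ₗ altOn F H n (lastSet n q))
    rw [← this]
    simp only [LinearMap.comp_assoc]
  have ht1 : dStarOp F H n k (dOp F H n (q + 1) v)
      = (((k : ℕ) : F) * ((q + 1 : ℕ) : F)) •
          (((symOn F H n (firstSet n k) ∘ₗ altOn F H n (lastSet n q))
            ∘ₗ altOn F H n (lastSet n (q + 1))
              ∘ₗ (symOn F H n (firstSet n k) ∘ₗ altOn F H n (lastSet n q))) v) := by
    unfold dStarOp dOp
    simp only [LinearMap.smul_apply, map_smul]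
    rw [smul_smul, mul_comm]
    congr 1
    conv_lhs => rw [← hEv]
    exact LinearMap.congr_fun hop1 v
  have ht2 : dOp F H n q (dStarOp F H n (k + 1) v)
      = (((q : ℕ) : F) * ((k + 1 : ℕ) : F)) •
          (((symOn F H n (firstSet n k) ∘ₗ altOn F H n (lastSet n q))
            ∘ₗ symOn F H n (firstSet n (k + 1))
              ∘ₗ (symOn F H n (firstSet n k) ∘ₗ altOn F H n (lastSet n q))) v) := by
    unfold dStarOp dOp
    simp only [LinearMap.smul_apply, map_smul]
    rw [smul_smul, mul_comm]
    congr 1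
    conv_lhs => rw [← hEv]
    exact LinearMap.congr_fun hop2 v
  rw [ht1, ht2, hKA, hKS]
  simp only [LinearMap.smul_apply, LinearMap.sub_apply, LinearMap.add_apply]
  rw [hEv]
  have hq1 : ((q + 1 : ℕ) : F) ≠ 0 := Nat.cast_ne_zero.mpr (by omega)
  have hk1 : ((k + 1 : ℕ) : F) ≠ 0 := Nat.cast_ne_zero.mpr (by omega)
  have hncast : ((n : ℕ) : F) = ((k : ℕ) : F) + ((q : ℕ) : F) := by
    rw [hn]; push_cast; ring
  rw [hncast]
  have e1 : (1 : F) + (q : F) ≠ 0 := by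
    push_cast at hq1
    rw [add_comm]
    exact hq1
  have e2 : (1 : F) + (k : F) ≠ 0 := by
    push_cast at hk1
    rw [add_comm]
    exact hk1
  have hA : ((1 : F) + (q : F)) * ((1 : F) + (q : F))⁻¹ = 1 := mul_inv_cancel₀ e1
  have hB : ((1 : F) + (k : F)) * ((1 : F) + (k : F))⁻¹ = 1 := mul_inv_cancel₀ e2
  match_scalars
  · linear_combination (k : F) * hA + (q : F) * hB
  · linear_combination (-(k : F) * (q : F)) * hA + ((k : F) * (q : F)) * hB

end Aux7

/-- Rawnsley; exactness of the d̆*-sequence: the sequence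
`0 → H^{∧n} = H_{0,n} →^{d̆*_{n-1}} H_{1,n-1} →^{d̆*_{n-2}} ⋯ →^{d̆*_0} H_{n,0} = H^{⊙n} → 0`
is exact: `d̆*_{n-1}` is injective, `d̆*_0` is surjective, and for `1 ≤ q ≤ n-1`,
`ker(d̆*_{q-1} : H_{n-q,q} → H_{n-q+1,q-1}) = im(d̆*_q : H_{n-q-1,q+1} → H_{n-q,q})`. -/
theorem dStarOp_sequence_exact (n : ℕ) (hn : 1 ≤ n) :
    (∀ v ∈ Hmix F H n 0, dStarOp F H n 1 v = 0 → v = 0) ∧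
    (∀ w ∈ Hmix F H n n, ∃ v ∈ Hmix F H n (n - 1), dStarOp F H n n v = w) ∧
    (∀ q : ℕ, 1 ≤ q → q ≤ n - 1 → ∀ v ∈ Hmix F H n (n - q),
      (dStarOp F H n (n - q + 1) v = 0 ↔
        ∃ u ∈ Hmix F H n (n - q - 1), dStarOp F H n (n - q) u = v)) := by
  refine ⟨?_, ?_, ?_⟩
  · -- injectivity of the first map
    intro v _ h0
    have hid : symOn F H n (firstSet n 1) = LinearMap.id :=
      symOn_eq_id F H (by rw [card_firstSet (show 1 ≤ n by omega)])
    have h1 : dStarOp F H n 1 v = v := by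
      unfold dStarOp
      rw [hid]
      simp
    rw [h1] at h0
    exact h0
  · -- surjectivity of the last map
    intro w hw
    have hA0 : altOn F H n (lastSet n (n - n)) = LinearMap.id :=
      altOn_eq_id F H (by rw [card_lastSet (by omega)]; omega)
    have hAl1 : altOn F H n (lastSet n (n - (n - 1))) = LinearMap.id :=
      altOn_eq_id F H (by rw [card_lastSet (by omega)]; omega)
    have hSnw : symOn F H n (firstSet n n) w = w := by
      have h2 := (mem_Hmix_iff F H (le_refl n)).mp hw
      rw [projOp_apply, hA0, LinearMap.id_apply] at h2
      exact h2
    refine ⟨(n : F)⁻¹ • projOp F H n (n - 1) w, ?_, ?_⟩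
    · exact Submodule.smul_mem _ _
        ((mem_Hmix_iff F H (show n - 1 ≤ n by omega)).mpr (projOp_proj F H (by omega) w))
    · unfold dStarOp
      simp only [LinearMap.smul_apply, map_smul]
      rw [smul_smul, inv_mul_cancel₀ (Nat.cast_ne_zero.mpr (by omega : n ≠ 0)), one_smul]
      rw [projOp_apply, hAl1, LinearMap.id_apply]
      have hstep : symOn F H n (firstSet n n) (symOn F H n (firstSet n (n - 1)) w)
          = symOn F H n (firstSet n n) w :=
        LinearMap.congr_fun (symOn_comp_symOn F H (firstSet_subset (by omega))) w
      rw [hstep, hSnw]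
  · -- exactness in the middle
    intro q hq1 hq2 v hv
    set k := n - q with hkdef
    have hkq : n = k + q := by omega
    have hk : 1 ≤ k := by omega
    constructor
    · intro h0
      have hhom := homotopy F H hkq hk hq1 hv
      rw [h0, map_zero, add_zero] at hhom
      refine ⟨(n : F)⁻¹ • dOp F H n (q + 1) v, ?_, ?_⟩
      · exact Submodule.smul_mem _ _ (dOp_mem_Hmix F H hkq hk hv)
      · rw [map_smul, hhom, smul_smul,
          inv_mul_cancel₀ (Nat.cast_ne_zero.mpr (by omega : n ≠ 0)), one_smul]
    · rintro ⟨u, hu, hueq⟩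
      rw [← hueq]
      have hu' := (mem_Hmix_iff F H (show k - 1 ≤ n by omega)).mp hu
      have hz : symOn F H n (firstSet n (k + 1)) ∘ₗ altOn F H n (lastSet n (q + 1)) = 0 :=
        symOn_comp_altOn_eq_zero F H (p := ⟨k - 1, by omega⟩) (r := ⟨k, by omega⟩)
          (by
            intro hcon
            rw [Fin.ext_iff] at hcon
            have : k - 1 = k := hcon
            omega)
          (mem_firstSet.mpr (by show k - 1 < k + 1; omega))
          (mem_firstSet.mpr (by show k < k + 1; omega))
          (mem_lastSet.mpr (by show n - (q + 1) ≤ k - 1; omega))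
          (mem_lastSet.mpr (by show n - (q + 1) ≤ k; omega))
      unfold dStarOp
      simp only [LinearMap.smul_apply, map_smul]
      have hzero : symOn F H n (firstSet n (k + 1)) (symOn F H n (firstSet n k) u) = 0 := by
        conv_lhs => rw [← hu']
        rw [projOp_apply, show n - (k - 1) = q + 1 from by omega]
        have c1 : ∀ y, symOn F H n (firstSet n k) (symOn F H n (firstSet n (k - 1)) y)
            = symOn F H n (firstSet n k) y :=
          fun y => LinearMap.congr_fun (symOn_comp_symOn F H (firstSet_subset (by omega))) y
        have c2 : ∀ y, symOn F H n (firstSet n (k + 1)) (symOn F H n (firstSet n k) y)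
            = symOn F H n (firstSet n (k + 1)) y :=
          fun y => LinearMap.congr_fun (symOn_comp_symOn F H (firstSet_subset (by omega))) y
        rw [c1, c2]
        exact LinearMap.congr_fun hz u
      rw [hzero]
      simp

end
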